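/- Let p be a prime, let r > 0, and let f be a function analytic on the closed ball {x ∈ ℂ_p : |x|_p ≤ r}. Let s, t be real numbers with 0 < s ≤ t ≤ r. Suppose f has exactly m zeros (counted with multiplicity) in the open ball B(t) = {x ∈ ℂ_p : |x|_p < t}, in the sense that f(z) = α·(z − b₁)⋯(z − b_m)·g(z) for some α ∈ ℂ_p, some b₁, …, b_m ∈ B(t), and some function g analytic on the closed ball {x : |x|_p ≤ r} having no zero in B(t). Then |f|_t ≤ (t/s)^m · |f|_s. -/

import Mathlib

/-!
STATEMENT 1 (Lemma 3.2 of the paper).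

We model `ℂ_p` by an arbitrary algebraically closed, complete, nonarchimedean
normed field `Cp` whose norm satisfies `‖p‖ = p⁻¹` (of which `ℂ_p` is an
instance).

A function analytic on the closed ball of radius `r` is given by its
coefficient sequence `a : ℕ → Cp` satisfying `‖a n‖ * r ^ n → 0`; its value at
`z` is `∑' n, a n * z ^ n` and its Gauss norm at radius `r` is
`⨆ n, ‖a n‖ * r ^ n`.
-/

open Filter

/-- The Gauss norm `|f|_r = sup_n ‖a n‖ * rⁿ` of the analytic function with
coefficient sequence `a`. -/
noncomputable def gaussNorm {Cp : Type*} [NormedField Cp] (a : ℕ → Cp) (r : ℝ) : ℝ :=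
  ⨆ n, ‖a n‖ * r ^ n


section Basic
variable {Cp : Type*} [NontriviallyNormedField Cp] [IsUltrametricDist Cp]

lemma gauss_nonneg (u : ℕ → Cp) {ρ : ℝ} (hρ : 0 ≤ ρ) : 0 ≤ gaussNorm u ρ :=
  Real.iSup_nonneg fun n => mul_nonneg (norm_nonneg _) (pow_nonneg hρ n)

lemma le_gauss (u : ℕ → Cp) {ρ : ℝ}
    (hb : BddAbove (Set.range fun n => ‖u n‖ * ρ ^ n)) (n : ℕ) :
    ‖u n‖ * ρ ^ n ≤ gaussNorm u ρ :=
  le_ciSup hb n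

lemma gauss_le (u : ℕ → Cp) {ρ B : ℝ} (hB : 0 ≤ B) (h : ∀ n, ‖u n‖ * ρ ^ n ≤ B) :
    gaussNorm u ρ ≤ B :=
  Real.iSup_le h hB

lemma bdd_of_tendsto {u : ℕ → Cp} {ρ : ℝ}
    (h : Tendsto (fun n => ‖u n‖ * ρ ^ n) atTop (nhds 0)) :
    BddAbove (Set.range fun n => ‖u n‖ * ρ ^ n) :=
  h.bddAbove_range

/-- strict ultrametric sum bound -/
lemma norm_sum_lt_ultra {ι : Type*} (s : Finset ι) (f : ι → Cp) {D : ℝ} (hD : 0 < D)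
    (h : ∀ i ∈ s, ‖f i‖ < D) : ‖∑ i ∈ s, f i‖ < D := by
  classical
  induction s using Finset.cons_induction with
  | empty => simpa using hD
  | cons a s ha ih =>
    rw [Finset.sum_cons]
    refine lt_of_le_of_lt (IsUltrametricDist.norm_add_le_max _ _) ?_
    exact max_lt (h a (Finset.mem_cons_self _ _)) (ih fun i hi => h i (Finset.mem_cons_of_mem hi))

lemma norm_add_eq_left_ultra {x y : Cp} (h : ‖y‖ < ‖x‖) : ‖x + y‖ = ‖x‖ := by
  refine le_antisymm ((IsUltrametricDist.norm_add_le_max _ _).trans (max_le le_rfl h.le)) ?_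
  have h2 : ‖x‖ ≤ max ‖x + y‖ ‖y‖ := by
    simpa using IsUltrametricDist.norm_add_le_max (x + y) (-y)
  rcases max_cases ‖x + y‖ ‖y‖ with ⟨he, _⟩ | ⟨he, _⟩
  · rwa [he] at h2
  · rw [he] at h2; exact absurd h2 (not_le.mpr h)

lemma norm_sub_eq_right_ultra {x y : Cp} (h : ‖x‖ < ‖y‖) : ‖x - y‖ = ‖y‖ := by
  have : ‖(-y) + x‖ = ‖-y‖ := norm_add_eq_left_ultra (by rwa [norm_neg])
  rw [norm_neg] at this
  rw [← this]; ring_nf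

lemma norm_sub_le_max_ultra (x y : Cp) : ‖x - y‖ ≤ max ‖x‖ ‖y‖ := by
  rw [sub_eq_add_neg]
  simpa using IsUltrametricDist.norm_add_le_max x (-y)

/-- existence of the greatest index attaining the Gauss norm -/
lemma exists_greatest_attain {u : ℕ → Cp} {ρ : ℝ} (hρ : 0 < ρ)
    (hu : Tendsto (fun n => ‖u n‖ * ρ ^ n) atTop (nhds 0)) {n₁ : ℕ} (hn₁ : u n₁ ≠ 0) :
    ∃ n₀, ‖u n₀‖ * ρ ^ n₀ = gaussNorm u ρ ∧ ∀ i, n₀ < i → ‖u i‖ * ρ ^ i < gaussNorm u ρ := by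
  classical
  set f : ℕ → ℝ := fun n => ‖u n‖ * ρ ^ n with hf
  have hpos : 0 < f n₁ := mul_pos (norm_pos_iff.mpr hn₁) (pow_pos hρ n₁)
  obtain ⟨K, hK⟩ := eventually_atTop.mp (hu.eventually (eventually_lt_nhds hpos))
  have hn₁K : n₁ < K := by
    by_contra h
    exact absurd (hK n₁ (le_of_not_gt h)) (lt_irrefl _)
  have hne : (Finset.range K).Nonempty := ⟨n₁, Finset.mem_range.mpr hn₁K⟩
  set M := (Finset.range K).sup' hne f with hM
  have hfn₁M : f n₁ ≤ M := Finset.le_sup' f (Finset.mem_range.mpr hn₁K)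
  have hub : ∀ n, f n ≤ M := by
    intro n
    by_cases h : n < K
    · exact Finset.le_sup' f (Finset.mem_range.mpr h)
    · exact (hK n (le_of_not_gt h)).le.trans hfn₁M
  have hbdd : BddAbove (Set.range f) := ⟨M, Set.forall_mem_range.mpr hub⟩
  have hgM : gaussNorm u ρ = M := by
    refine le_antisymm (gauss_le _ (hpos.le.trans hfn₁M) hub) ?_
    obtain ⟨i, hi, hieq⟩ := Finset.exists_mem_eq_sup' hne f
    rw [hM, hieq]
    exact le_gauss u hbdd i
  classical
  set A := (Finset.range K).filter (fun n => f n = M) with hA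
  have hAne : A.Nonempty := by
    obtain ⟨i, hi, hieq⟩ := Finset.exists_mem_eq_sup' hne f
    exact ⟨i, Finset.mem_filter.mpr ⟨hi, hieq.symm⟩⟩
  refine ⟨A.max' hAne, ?_, ?_⟩
  · have := (Finset.mem_filter.mp (A.max'_mem hAne)).2
    rw [hgM]; exact this
  · intro i hi
    rw [hgM]
    refine lt_of_le_of_ne (hub i) ?_
    intro hieq
    have hiK : i < K := by
      by_contra h
      exact absurd hieq (ne_of_lt ((hK i (le_of_not_gt h)).trans_le hfn₁M))
    exact absurd (A.le_max' i (Finset.mem_filter.mpr ⟨Finset.mem_range.mpr hiK, hieq⟩))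
      (not_le.mpr hi)
end Basic
section B
variable {Cp : Type*} [NontriviallyNormedField Cp] [IsUltrametricDist Cp]

noncomputable def convS (u v : ℕ → Cp) (n : ℕ) : Cp :=
  ∑ ij ∈ Finset.HasAntidiagonal.antidiagonal n, u ij.1 * v ij.2

lemma convS_term_le {u v : ℕ → Cp} {ρ : ℝ} (hρ : 0 < ρ)
    (hbu : BddAbove (Set.range fun n => ‖u n‖ * ρ ^ n))
    (hbv : BddAbove (Set.range fun n => ‖v n‖ * ρ ^ n)) (n : ℕ) :
    ‖convS u v n‖ * ρ ^ n ≤ gaussNorm u ρ * gaussNorm v ρ := by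
  have h : ‖convS u v n‖ ≤ gaussNorm u ρ * gaussNorm v ρ / ρ ^ n := by
    refine IsUltrametricDist.norm_sum_le_of_forall_le_of_nonneg
      (div_nonneg (mul_nonneg (gauss_nonneg u hρ.le) (gauss_nonneg v hρ.le)) (by positivity)) ?_
    rintro ⟨i, j⟩ hij
    have hij' : i + j = n := Finset.HasAntidiagonal.mem_antidiagonal.mp hij
    rw [norm_mul]
    rw [le_div_iff₀ (by positivity)]
    calc ‖u i‖ * ‖v j‖ * ρ ^ n = (‖u i‖ * ρ ^ i) * (‖v j‖ * ρ ^ j) := by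
          rw [← hij', pow_add]; ring
    _ ≤ gaussNorm u ρ * gaussNorm v ρ :=
        mul_le_mul (le_gauss u hbu i) (le_gauss v hbv j)
          (by positivity) (gauss_nonneg u hρ.le)
  calc ‖convS u v n‖ * ρ ^ n ≤ (gaussNorm u ρ * gaussNorm v ρ / ρ ^ n) * ρ ^ n :=
        mul_le_mul_of_nonneg_right h (by positivity)
  _ = gaussNorm u ρ * gaussNorm v ρ := by field_simp

lemma convS_attain {u v : ℕ → Cp} {ρ : ℝ} (hρ : 0 < ρ)
    (hbu : BddAbove (Set.range fun n => ‖u n‖ * ρ ^ n))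
    (hbv : BddAbove (Set.range fun n => ‖v n‖ * ρ ^ n))
    {i₀ j₀ : ℕ}
    (hu : ‖u i₀‖ * ρ ^ i₀ = gaussNorm u ρ) (hu' : ∀ i, i₀ < i → ‖u i‖ * ρ ^ i < gaussNorm u ρ)
    (hv : ‖v j₀‖ * ρ ^ j₀ = gaussNorm v ρ) (hv' : ∀ j, j₀ < j → ‖v j‖ * ρ ^ j < gaussNorm v ρ)
    (hupos : 0 < gaussNorm u ρ) (hvpos : 0 < gaussNorm v ρ) :
    ‖convS u v (i₀ + j₀)‖ * ρ ^ (i₀ + j₀) = gaussNorm u ρ * gaussNorm v ρ := by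
  classical
  set n₀ := i₀ + j₀
  have hmem : ((i₀, j₀) : ℕ × ℕ) ∈ Finset.HasAntidiagonal.antidiagonal n₀ := Finset.HasAntidiagonal.mem_antidiagonal.mpr rfl
  have hsplit : convS u v n₀ = u i₀ * v j₀ +
      ∑ ij ∈ (Finset.HasAntidiagonal.antidiagonal n₀).erase (i₀, j₀), u ij.1 * v ij.2 :=
    (Finset.add_sum_erase _ _ hmem).symm
  have hmain : ‖u i₀ * v j₀‖ = gaussNorm u ρ * gaussNorm v ρ / ρ ^ n₀ := by
    rw [norm_mul, ← hu, ← hv]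
    field_simp [pow_add]
    ring
  have hrest : ‖∑ ij ∈ (Finset.HasAntidiagonal.antidiagonal n₀).erase (i₀, j₀), u ij.1 * v ij.2‖ <
      gaussNorm u ρ * gaussNorm v ρ / ρ ^ n₀ := by
    refine norm_sum_lt_ultra _ _ (div_pos (mul_pos hupos hvpos) (pow_pos hρ _)) ?_
    rintro ⟨i, j⟩ hij
    have hne : ((i, j) : ℕ × ℕ) ≠ (i₀, j₀) := Finset.ne_of_mem_erase hij
    have hij' : i + j = n₀ := Finset.HasAntidiagonal.mem_antidiagonal.mp (Finset.mem_of_mem_erase hij)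
    rw [norm_mul, lt_div_iff₀ (by positivity)]
    have key : (‖u i‖ * ρ ^ i) * (‖v j‖ * ρ ^ j) < gaussNorm u ρ * gaussNorm v ρ := by
      rcases lt_trichotomy i i₀ with h | h | h
      · have hj : j₀ < j := by omega
        calc (‖u i‖ * ρ ^ i) * (‖v j‖ * ρ ^ j) ≤ gaussNorm u ρ * (‖v j‖ * ρ ^ j) :=
              mul_le_mul_of_nonneg_right (le_gauss u hbu i) (by positivity)
        _ < gaussNorm u ρ * gaussNorm v ρ :=
              mul_lt_mul_of_pos_left (hv' j hj) hupos
      · exact absurd (by simp [h] at hij' ⊢; omega : (i,j) = ((i₀ : ℕ), j₀)) hne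
      · calc (‖u i‖ * ρ ^ i) * (‖v j‖ * ρ ^ j) ≤ (‖u i‖ * ρ ^ i) * gaussNorm v ρ :=
              mul_le_mul_of_nonneg_left (le_gauss v hbv j) (by positivity)
        _ < gaussNorm u ρ * gaussNorm v ρ :=
              mul_lt_mul_of_pos_right (hu' i h) hvpos
    calc ‖u i‖ * ‖v j‖ * ρ ^ n₀ = (‖u i‖ * ρ ^ i) * (‖v j‖ * ρ ^ j) := by
          rw [← hij', pow_add]; ring
    _ < gaussNorm u ρ * gaussNorm v ρ := key
  rw [hsplit, norm_add_eq_left_ultra (by rw [hmain]; exact hrest), hmain]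
  field_simp
end B
section C
open Polynomial
variable {Cp : Type*} [NontriviallyNormedField Cp] [IsUltrametricDist Cp]

noncomputable def pGauss (P : Polynomial Cp) (ρ : ℝ) : ℝ := gaussNorm P.coeff ρ

lemma poly_tendsto (P : Polynomial Cp) (ρ : ℝ) :
    Tendsto (fun n => ‖P.coeff n‖ * ρ ^ n) atTop (nhds 0) := by
  refine Tendsto.congr' ?_ tendsto_const_nhds
  filter_upwards [eventually_gt_atTop P.natDegree] with n hn
  rw [P.coeff_eq_zero_of_natDegree_lt hn, norm_zero, zero_mul]

lemma poly_bdd (P : Polynomial Cp) (ρ : ℝ) :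
    BddAbove (Set.range fun n => ‖P.coeff n‖ * ρ ^ n) :=
  bdd_of_tendsto (poly_tendsto P ρ)

lemma pGauss_nonneg (P : Polynomial Cp) {ρ : ℝ} (hρ : 0 ≤ ρ) : 0 ≤ pGauss P ρ :=
  gauss_nonneg _ hρ

lemma pGauss_pos {P : Polynomial Cp} {ρ : ℝ} (hρ : 0 < ρ) (hP : P ≠ 0) : 0 < pGauss P ρ :=
  lt_of_lt_of_le (mul_pos (norm_pos_iff.mpr (Polynomial.leadingCoeff_ne_zero.mpr hP))
    (pow_pos hρ P.natDegree)) (le_gauss _ (poly_bdd P ρ) P.natDegree)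

lemma pGauss_zero (ρ : ℝ) : pGauss (0 : Polynomial Cp) ρ = 0 := by
  unfold pGauss _root_.gaussNorm
  simp

lemma poly_attain {P : Polynomial Cp} {ρ : ℝ} (hρ : 0 < ρ) (hP : P ≠ 0) :
    ∃ n₀, ‖P.coeff n₀‖ * ρ ^ n₀ = pGauss P ρ ∧
      ∀ i, n₀ < i → ‖P.coeff i‖ * ρ ^ i < pGauss P ρ :=
  exists_greatest_attain hρ (poly_tendsto P ρ) (Polynomial.leadingCoeff_ne_zero.mpr hP)

lemma pGauss_mul (P Q : Polynomial Cp) {ρ : ℝ} (hρ : 0 < ρ) :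
    pGauss (P * Q) ρ = pGauss P ρ * pGauss Q ρ := by
  rcases eq_or_ne P 0 with rfl | hP
  · simp [pGauss_zero]
  rcases eq_or_ne Q 0 with rfl | hQ
  · simp [pGauss_zero]
  have hconv : ∀ n, (P * Q).coeff n = convS P.coeff Q.coeff n := fun n => P.coeff_mul Q n
  obtain ⟨i₀, hi₀, hi₀'⟩ := poly_attain hρ hP
  obtain ⟨j₀, hj₀, hj₀'⟩ := poly_attain hρ hQ
  refine le_antisymm (gauss_le _ (mul_nonneg (pGauss_nonneg P hρ.le) (pGauss_nonneg Q hρ.le))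
    fun n => ?_) ?_
  · rw [hconv n]
    exact convS_term_le hρ (poly_bdd P ρ) (poly_bdd Q ρ) n
  · calc pGauss P ρ * pGauss Q ρ
        = ‖(P * Q).coeff (i₀ + j₀)‖ * ρ ^ (i₀ + j₀) := by
          rw [hconv]
          exact (convS_attain hρ (poly_bdd P ρ) (poly_bdd Q ρ) hi₀ hi₀' hj₀ hj₀'
            (pGauss_pos hρ hP) (pGauss_pos hρ hQ)).symm
    _ ≤ pGauss (P * Q) ρ := le_gauss _ (poly_bdd _ ρ) _

lemma pGauss_mul_attain {P Q : Polynomial Cp} {ρ : ℝ} (hρ : 0 < ρ) (hP : P ≠ 0) (hQ : Q ≠ 0)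
    {i₀ j₀ : ℕ}
    (hu : ‖P.coeff i₀‖ * ρ ^ i₀ = pGauss P ρ) (hu' : ∀ i, i₀ < i → ‖P.coeff i‖ * ρ ^ i < pGauss P ρ)
    (hv : ‖Q.coeff j₀‖ * ρ ^ j₀ = pGauss Q ρ)
    (hv' : ∀ j, j₀ < j → ‖Q.coeff j‖ * ρ ^ j < pGauss Q ρ) :
    ‖(P * Q).coeff (i₀ + j₀)‖ * ρ ^ (i₀ + j₀) = pGauss P ρ * pGauss Q ρ := by
  rw [P.coeff_mul Q]
  exact convS_attain hρ (poly_bdd P ρ) (poly_bdd Q ρ) hu hu' hv hv'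
    (pGauss_pos hρ hP) (pGauss_pos hρ hQ)

lemma pGauss_C (γ : Cp) {ρ : ℝ} (hρ : 0 < ρ) : pGauss (C γ) ρ = ‖γ‖ := by
  refine le_antisymm (gauss_le _ (norm_nonneg _) fun n => ?_) ?_
  · rcases Nat.eq_zero_or_pos n with rfl | hn
    · simp
    · rw [coeff_C, if_neg hn.ne']
      simp
  · have := le_gauss (C γ : Polynomial Cp).coeff (poly_bdd _ ρ) 0
    simpa [pGauss] using this

lemma pGauss_linear (β : Cp) {ρ : ℝ} (hρ : 0 < ρ) :
    pGauss (X - C β) ρ = max ρ ‖β‖ := by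
  have h0 : (X - C β : Polynomial Cp).coeff 0 = -β := by simp
  have h1 : (X - C β : Polynomial Cp).coeff 1 = 1 := by simp
  refine le_antisymm (gauss_le _ (le_max_of_le_left hρ.le) fun n => ?_) ?_
  · match n with
    | 0 => simpa [h0] using le_max_right ρ ‖β‖
    | 1 => simpa [h1] using le_max_left ρ ‖β‖
    | (k+2) => 
      rw [Polynomial.coeff_eq_zero_of_natDegree_lt]
      · simp [le_max_of_le_left hρ.le]
      · rw [natDegree_X_sub_C]; omega
  · rcases max_cases ρ ‖β‖ with ⟨he, _⟩ | ⟨he, _⟩ <;> rw [he]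
    · have := le_gauss (X - C β : Polynomial Cp).coeff (poly_bdd _ ρ) 1
      rw [h1] at this
      simpa [pGauss] using this
    · have := le_gauss (X - C β : Polynomial Cp).coeff (poly_bdd _ ρ) 0
      rw [h0] at this
      simpa [pGauss] using this

lemma pGauss_multiset (S : Multiset Cp) {ρ : ℝ} (hρ : 0 < ρ) :
    pGauss ((S.map fun β => X - C β).prod) ρ = ((S.map fun β => max ρ ‖β‖)).prod := by
  induction S using Multiset.induction_on with
  | empty =>
    simp only [Multiset.map_zero, Multiset.prod_zero]
    rw [show (1 : Polynomial Cp) = C 1 by simp, pGauss_C _ hρ]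
    simp
  | cons β S ih =>
    simp only [Multiset.map_cons, Multiset.prod_cons]
    rw [pGauss_mul _ _ hρ, pGauss_linear _ hρ, ih]
end C
section D
open Polynomial
variable {Cp : Type*} [NontriviallyNormedField Cp] [IsUltrametricDist Cp] [IsAlgClosed Cp]

lemma multiset_exists_min {α : Type*} (s : Multiset α) (hs : s ≠ 0) (f : α → ℝ) :
    ∃ y ∈ s, ∀ z ∈ s, f y ≤ f z := by
  induction s using Multiset.induction_on with
  | empty => exact absurd rfl hs
  | cons a s ih =>
    rcases eq_or_ne s 0 with rfl | hs'
    · exact ⟨a, Multiset.mem_cons_self _ _, by simp⟩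
    · obtain ⟨y, hy, hmin⟩ := ih hs'
      rcases le_total (f a) (f y) with h | h
      · refine ⟨a, Multiset.mem_cons_self _ _, fun z hz => ?_⟩
        rcases Multiset.mem_cons.mp hz with rfl | hz
        · exact le_rfl
        · exact h.trans (hmin z hz)
      · refine ⟨y, Multiset.mem_cons_of_mem hy, fun z hz => ?_⟩
        rcases Multiset.mem_cons.mp hz with rfl | hz
        · exact h
        · exact hmin z hz

lemma multiset_norm_prod (s : Multiset Cp) : ‖s.prod‖ = (s.map fun x => ‖x‖).prod := by
  induction s using Multiset.induction_on with
  | empty => simp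
  | cons a s ih => simp [norm_mul, ih]

lemma multiset_pow_card_le_prod (s : Multiset Cp) (f : Cp → ℝ) {δ : ℝ} (hδ : 0 ≤ δ)
    (h : ∀ a ∈ s, δ ≤ f a) : δ ^ Multiset.card s ≤ (s.map f).prod := by
  induction s using Multiset.induction_on with
  | empty => simp
  | cons a s ih =>
    simp only [Multiset.map_cons, Multiset.prod_cons, Multiset.card_cons, pow_succ]
    rw [mul_comm (δ ^ Multiset.card s) δ]
    exact mul_le_mul (h a (Multiset.mem_cons_self _ _))
      (ih fun z hz => h z (Multiset.mem_cons_of_mem hz)) (pow_nonneg hδ _)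
      ((hδ.trans (h a (Multiset.mem_cons_self _ _))))

lemma multiset_prod_pos (s : Multiset ℝ) (h : ∀ a ∈ s, 0 < a) : 0 < s.prod := by
  induction s using Multiset.induction_on with
  | empty => simp
  | cons a s ih =>
    rw [Multiset.prod_cons]
    exact mul_pos (h a (Multiset.mem_cons_self _ _))
      (ih fun z hz => h z (Multiset.mem_cons_of_mem hz))

lemma step_lemma {ρ : ℝ} (hρ : 0 < ρ) (P : Polynomial Cp) (hP0 : ‖P.coeff 0‖ < pGauss P ρ)
    (K₁ : ℕ) (hK : ∀ i, K₁ < i → ‖P.coeff i‖ * ρ ^ i < pGauss P ρ)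
    (x : Cp) (hx : ‖x‖ ≤ ρ) :
    ∃ y, ‖y‖ ≤ ρ ∧ P.IsRoot y ∧ ‖x - y‖ ^ K₁ ≤ ρ ^ K₁ * (‖P.eval x‖ / pGauss P ρ) := by
  classical
  have hPne : P ≠ 0 := by
    rintro rfl
    rw [pGauss_zero] at hP0
    simp at hP0
  have hGpos : 0 < pGauss P ρ := pGauss_pos hρ hPne
  have hlead : P.leadingCoeff ≠ 0 := Polynomial.leadingCoeff_ne_zero.mpr hPne
  have hcard : Multiset.card P.roots = P.natDegree :=
    Polynomial.splits_iff_card_roots.mp (IsAlgClosed.splits P)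
  have hfact : C P.leadingCoeff * (P.roots.map fun a => X - C a).prod = P :=
    Polynomial.C_leadingCoeff_mul_prod_multiset_X_sub_C hcard
  set Rnear := P.roots.filter (fun β => ‖β‖ ≤ ρ) with hRnear
  set Rfar := P.roots.filter (fun β => ¬ ‖β‖ ≤ ρ) with hRfar
  have hsplitR : Rnear + Rfar = P.roots := Multiset.filter_add_not _ _
  set k := Multiset.card Rnear with hk
  set D : ℝ := ‖P.leadingCoeff‖ * ((Rfar.map fun β => ‖β‖).prod) with hD
  have hfarpos : ∀ β ∈ Rfar, ρ < ‖β‖ := by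
    intro β hβ
    rw [hRfar, Multiset.mem_filter] at hβ
    exact lt_of_not_ge hβ.2
  have hDpos : 0 < D := by
    refine mul_pos (norm_pos_iff.mpr hlead) (multiset_prod_pos _ ?_)
    intro a ha
    obtain ⟨β, hβ, rfl⟩ := Multiset.mem_map.mp ha
    exact hρ.trans (hfarpos β hβ)
  -- Gauss norm formula
  have hnearmax : (Rnear.map fun β => max ρ ‖β‖).prod = ρ ^ k := by
    have h1 : Rnear.map (fun β => max ρ ‖β‖) = Rnear.map (fun _ => ρ) :=
      Multiset.map_congr rfl (fun β hβ => max_eq_left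
        (by rw [hRnear, Multiset.mem_filter] at hβ; exact hβ.2))
    rw [h1, Multiset.map_const', Multiset.prod_replicate]
  have hfarmax : (Rfar.map fun β => max ρ ‖β‖).prod = (Rfar.map fun β => ‖β‖).prod := by
    have h1 : Rfar.map (fun β => max ρ ‖β‖) = Rfar.map (fun β => ‖β‖) :=
      Multiset.map_congr rfl (fun β hβ => max_eq_right (hfarpos β hβ).le)
    rw [h1]
  have hG : pGauss P ρ = D * ρ ^ k := by
    conv_lhs => rw [← hfact]
    rw [pGauss_mul _ _ hρ, pGauss_C _ hρ, pGauss_multiset _ hρ, ← hsplitR,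
      Multiset.map_add, Multiset.prod_add, hnearmax, hfarmax, hD]
    ring
  -- evaluation formula
  have heval : ∀ w : Cp, ‖P.eval w‖ =
      ‖P.leadingCoeff‖ * ((P.roots.map fun β => ‖w - β‖).prod) := by
    intro w
    conv_lhs => rw [← hfact]
    rw [Polynomial.eval_mul, Polynomial.eval_C, Polynomial.eval_multiset_prod, norm_mul,
      multiset_norm_prod, Multiset.map_map, Multiset.map_map]
    congr 2
    refine Multiset.map_congr rfl fun β _ => ?_
    simp
  -- near roots exist
  have hknz : Rnear ≠ 0 := by
    intro h0
    have hroots : P.roots = Rfar := by rw [← hsplitR, h0, zero_add]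
    have : ‖P.coeff 0‖ = D := by
      rw [Polynomial.coeff_zero_eq_eval_zero, heval 0, hroots, hD]
      congr 2
      refine Multiset.map_congr rfl fun β _ => ?_
      simp
    rw [this, hG] at hP0
    have hk0 : k = 0 := by rw [hk, h0]; simp
    rw [hk0, pow_zero, mul_one] at hP0
    exact absurd hP0 (lt_irrefl _)
  have hkpos : 0 < k := Multiset.card_pos.mpr hknz
  -- k ≤ K₁
  set V : Polynomial Cp := (Rnear.map fun β => X - C β).prod with hV
  set U : Polynomial Cp := C P.leadingCoeff * (Rfar.map fun β => X - C β).prod with hU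
  have hPUV : P = U * V := by
    conv_lhs => rw [← hfact, ← hsplitR]
    rw [Multiset.map_add, Multiset.prod_add, hU, hV]
    ring
  have hVmonic : V.Monic :=
    Polynomial.monic_multiset_prod_of_monic _ _ fun β _ => Polynomial.monic_X_sub_C β
  have hVdeg : V.natDegree = k := by
    rw [hV, Polynomial.natDegree_multiset_prod_of_monic]
    · rw [Multiset.map_map]
      simp [Function.comp_def, natDegree_X_sub_C, hk]
    · intro f hf
      obtain ⟨β, _, rfl⟩ := Multiset.mem_map.mp hf
      exact monic_X_sub_C β
  have hVne : V ≠ 0 := hVmonic.ne_zero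
  have hUne : U ≠ 0 := by
    rw [hU]
    refine mul_ne_zero (by simpa using hlead) ?_
    exact (Polynomial.monic_multiset_prod_of_monic _ _ fun β _ => monic_X_sub_C β).ne_zero
  have hpV : pGauss V ρ = ρ ^ k := by rw [hV, pGauss_multiset _ hρ, hnearmax]
  obtain ⟨i₀, hi₀, hi₀'⟩ := poly_attain hρ hUne
  have hvk : ‖V.coeff k‖ * ρ ^ k = pGauss V ρ := by
    rw [← hVdeg, hVmonic.coeff_natDegree, hVdeg, hpV]
    simp
  have hvk' : ∀ j, k < j → ‖V.coeff j‖ * ρ ^ j < pGauss V ρ := by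
    intro j hj
    rw [Polynomial.coeff_eq_zero_of_natDegree_lt (by rwa [hVdeg])]
    rw [hpV]
    simpa using pow_pos hρ k
  have hattain := pGauss_mul_attain hρ hUne hVne hi₀ hi₀' hvk hvk'
  rw [← hPUV] at hattain
  have hUVG : pGauss U ρ * pGauss V ρ = pGauss P ρ := by
    conv_rhs => rw [hPUV]
    exact (pGauss_mul U V hρ).symm
  rw [hUVG] at hattain
  have hkK : k ≤ K₁ := by
    by_contra h
    have := hK (i₀ + k) (by omega)
    rw [hattain] at this
    exact absurd this (lt_irrefl _)
  -- choose the nearest near-root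
  obtain ⟨y, hyR, hymin⟩ := multiset_exists_min Rnear hknz (fun β => ‖x - β‖)
  have hy : ‖y‖ ≤ ρ := by
    have := hyR
    rw [hRnear, Multiset.mem_filter] at this
    exact this.2
  have hyroot : P.IsRoot y :=
    (Polynomial.mem_roots'.mp (Multiset.mem_of_mem_filter hyR)).2
  have hδρ : ‖x - y‖ ≤ ρ := (norm_sub_le_max_ultra x y).trans (max_le hx hy)
  have hδ0 : 0 ≤ ‖x - y‖ := norm_nonneg _
  -- lower bound on |P(x)|
  have hlow : D * ‖x - y‖ ^ k ≤ ‖P.eval x‖ := by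
    rw [heval x, ← hsplitR, Multiset.map_add, Multiset.prod_add]
    have hfar_eq : (Rfar.map fun β => ‖x - β‖).prod = (Rfar.map fun β => ‖β‖).prod := by
      refine congrArg _ (Multiset.map_congr rfl fun β hβ => ?_)
      exact norm_sub_eq_right_ultra (hx.trans_lt (hfarpos β hβ))
    have hnear_ge : ‖x - y‖ ^ k ≤ (Rnear.map fun β => ‖x - β‖).prod :=
      multiset_pow_card_le_prod _ _ hδ0 fun β hβ => hymin β hβ
    calc D * ‖x - y‖ ^ k = ‖P.leadingCoeff‖ * ((Rfar.map fun β => ‖β‖).prod) * ‖x - y‖ ^ k := by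
          rw [hD]
    _ ≤ ‖P.leadingCoeff‖ * ((Rfar.map fun β => ‖β‖).prod) * (Rnear.map fun β => ‖x - β‖).prod := by
          refine mul_le_mul_of_nonneg_left hnear_ge hDpos.le
    _ = ‖P.leadingCoeff‖ * ((Rnear.map fun β => ‖x - β‖).prod * (Rfar.map fun β => ‖x - β‖).prod) := by
          rw [hfar_eq]; ring
  refine ⟨y, hy, hyroot, ?_⟩
  -- final arithmetic
  have hstep1 : ‖x - y‖ ^ k / ρ ^ k ≤ ‖P.eval x‖ / pGauss P ρ := by
    rw [hG, div_le_div_iff₀ (pow_pos hρ k) (by rw [← hG]; exact hGpos)]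
    calc ‖x - y‖ ^ k * (D * ρ ^ k) = (D * ‖x - y‖ ^ k) * ρ ^ k := by ring
    _ ≤ ‖P.eval x‖ * ρ ^ k := mul_le_mul_of_nonneg_right hlow (by positivity)
  calc ‖x - y‖ ^ K₁ = ‖x - y‖ ^ (K₁ - k) * ‖x - y‖ ^ k := by
        rw [← pow_add]; congr 1; omega
  _ ≤ ρ ^ (K₁ - k) * ‖x - y‖ ^ k :=
        mul_le_mul_of_nonneg_right (pow_le_pow_left₀ hδ0 hδρ _) (by positivity)
  _ = ρ ^ K₁ * (‖x - y‖ ^ k / ρ ^ k) := by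
        rw [pow_sub₀ _ hρ.ne' hkK]
        field_simp
  _ ≤ ρ ^ K₁ * (‖P.eval x‖ / pGauss P ρ) :=
        mul_le_mul_of_nonneg_left hstep1 (by positivity)
end D
section E
open Polynomial
variable {Cp : Type*} [NontriviallyNormedField Cp] [IsUltrametricDist Cp] [IsAlgClosed Cp]
  [CompleteSpace Cp]

noncomputable def trunc (c : ℕ → Cp) (j : ℕ) : Polynomial Cp :=
  ∑ n ∈ Finset.range (j+1), Polynomial.monomial n (c n)

lemma trunc_coeff (c : ℕ → Cp) (j i : ℕ) :
    (trunc c j).coeff i = if i ≤ j then c i else 0 := by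
  unfold trunc
  rw [Polynomial.finset_sum_coeff]
  simp only [Polynomial.coeff_monomial]
  rw [Finset.sum_ite_eq' (Finset.range (j+1)) i]
  simp [Nat.lt_succ_iff]

lemma trunc_eval (c : ℕ → Cp) (j : ℕ) (x : Cp) :
    (trunc c j).eval x = ∑ n ∈ Finset.range (j+1), c n * x ^ n := by
  unfold trunc
  rw [Polynomial.eval_finset_sum]
  simp [Polynomial.eval_monomial]

lemma trunc_succ (c : ℕ → Cp) (j : ℕ) :
    trunc c (j+1) = trunc c j + Polynomial.monomial (j+1) (c (j+1)) := by
  unfold trunc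
  rw [Finset.sum_range_succ]

lemma pow_sub_pow_norm_le {w x : Cp} {ρ : ℝ} (hw : ‖w‖ ≤ ρ) (hx : ‖x‖ ≤ ρ) (hρ : 0 < ρ)
    (n : ℕ) : ‖w ^ n - x ^ n‖ ≤ (n : ℝ) * ρ ^ (n-1) * ‖w - x‖ := by
  rcases Nat.eq_zero_or_pos n with rfl | hn
  · simp
  rw [← geom_sum₂_mul w x n, norm_mul]
  refine mul_le_mul_of_nonneg_right ?_ (norm_nonneg _)
  calc ‖∑ i ∈ Finset.range n, w ^ i * x ^ (n - 1 - i)‖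
      ≤ ∑ i ∈ Finset.range n, ‖w ^ i * x ^ (n - 1 - i)‖ := norm_sum_le _ _
  _ ≤ ∑ _i ∈ Finset.range n, ρ ^ (n-1) := by
      refine Finset.sum_le_sum fun i hi => ?_
      have hi' : i < n := Finset.mem_range.mp hi
      rw [norm_mul, norm_pow, norm_pow]
      calc ‖w‖ ^ i * ‖x‖ ^ (n - 1 - i) ≤ ρ ^ i * ρ ^ (n - 1 - i) :=
            mul_le_mul (pow_le_pow_left₀ (norm_nonneg _) hw i)
              (pow_le_pow_left₀ (norm_nonneg _) hx _) (by positivity) (by positivity)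
      _ = ρ ^ (n-1) := by rw [← pow_add]; congr 1; omega
  _ = (n : ℝ) * ρ ^ (n-1) := by rw [Finset.sum_const, Finset.card_range, nsmul_eq_mul]

lemma exists_zero {r ρ : ℝ} (hρ : 0 < ρ) (hρr : ρ < r) (c : ℕ → Cp)
    (hc : Tendsto (fun n => ‖c n‖ * r ^ n) atTop (nhds 0))
    (N : ℕ) (hN : 1 ≤ N) (hlt : ‖c 0‖ < ‖c N‖ * ρ ^ N) :
    ∃ z : Cp, ‖z‖ ≤ ρ ∧ ∑' n, c n * z ^ n = 0 := by
  classical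
  have hr : 0 < r := hρ.trans hρr
  obtain ⟨B, hB'⟩ := bdd_of_tendsto hc
  have hB : ∀ n, ‖c n‖ * r ^ n ≤ B := fun n => hB' (Set.mem_range_self n)
  have hB0 : 0 ≤ B := le_trans (by positivity) (hB 0)
  set q : ℝ := ρ / r with hqdef
  have hq0 : 0 < q := div_pos hρ hr
  have hq1 : q < 1 := (div_lt_one hr).mpr hρr
  have hρrq : ρ = r * q := by rw [hqdef]; field_simp
  have hgeo : ∀ n, ‖c n‖ * ρ ^ n ≤ B * q ^ n := by
    intro n
    calc ‖c n‖ * ρ ^ n = (‖c n‖ * r ^ n) * q ^ n := by rw [hρrq, mul_pow]; ring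
    _ ≤ B * q ^ n := mul_le_mul_of_nonneg_right (hB n) (by positivity)
  have hcρ : Tendsto (fun n => ‖c n‖ * ρ ^ n) atTop (nhds 0) := by
    refine squeeze_zero (fun n => by positivity) hgeo ?_
    simpa using (tendsto_pow_atTop_nhds_zero_of_lt_one hq0.le hq1).const_mul B
  set M₀ : ℝ := ‖c N‖ * ρ ^ N with hM₀def
  have hM₀ : 0 < M₀ := lt_of_le_of_lt (norm_nonneg (c 0)) hlt
  obtain ⟨K₀, hK₀⟩ := eventually_atTop.mp (hcρ.eventually (eventually_lt_nhds hM₀))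
  set K₁ := max N K₀ with hK₁def
  have hK₁N : N ≤ K₁ := le_max_left _ _
  have hK₁1 : 1 ≤ K₁ := hN.trans hK₁N
  have htail : ∀ n, K₁ < n → ‖c n‖ * ρ ^ n < M₀ := fun n hn =>
    hK₀ n (le_of_lt (lt_of_le_of_lt (le_max_right N K₀) hn))
  set P : ℕ → Polynomial Cp := fun j => trunc c (K₁ + j) with hPdef
  have hPcoeff : ∀ j i, i ≤ K₁ + j → (P j).coeff i = c i := by
    intro j i hi
    rw [hPdef, trunc_coeff, if_pos hi]
  have hPG : ∀ j, M₀ ≤ pGauss (P j) ρ := by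
    intro j
    have h := le_gauss (P j).coeff (poly_bdd (P j) ρ) N
    rwa [hPcoeff j N (le_trans hK₁N (Nat.le_add_right _ _))] at h
  have hP0 : ∀ j, ‖(P j).coeff 0‖ < pGauss (P j) ρ := by
    intro j
    rw [hPcoeff j 0 (Nat.zero_le _)]
    exact lt_of_lt_of_le hlt (hPG j)
  have hKhyp : ∀ j i, K₁ < i → ‖(P j).coeff i‖ * ρ ^ i < pGauss (P j) ρ := by
    intro j i hi
    by_cases h : i ≤ K₁ + j
    · rw [hPcoeff j i h]
      exact lt_of_lt_of_le (htail i hi) (hPG j)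
    · rw [hPdef, trunc_coeff, if_neg h]
      simpa using lt_of_lt_of_le hM₀ (hPG j)
  have hex : ∀ (j : ℕ) (x : Cp), ∃ y, ‖x‖ ≤ ρ →
      ‖y‖ ≤ ρ ∧ (P j).IsRoot y ∧
        ‖x - y‖ ^ K₁ ≤ ρ ^ K₁ * (‖(P j).eval x‖ / pGauss (P j) ρ) := by
    intro j x
    by_cases hx : ‖x‖ ≤ ρ
    · obtain ⟨y, h1, h2, h3⟩ := step_lemma hρ (P j) (hP0 j) K₁ (hKhyp j) x hx
      exact ⟨y, fun _ => ⟨h1, h2, h3⟩⟩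
    · exact ⟨0, fun h => absurd h hx⟩
  choose F hF using hex
  set seq : ℕ → Cp := fun i => Nat.rec (F 0 0) (fun i xi => F (i+1) xi) i with hseqdef
  have hseq0 : seq 0 = F 0 0 := rfl
  have hseqS : ∀ i, seq (i+1) = F (i+1) (seq i) := fun i => rfl
  have hseq : ∀ i, ‖seq i‖ ≤ ρ ∧ (P i).IsRoot (seq i) := by
    intro i
    induction i with
    | zero =>
      have := hF 0 0 (by simpa using hρ.le)
      exact ⟨this.1, this.2.1⟩
    | succ i ih =>
      have := hF (i+1) (seq i) ih.1
      rw [hseqS i]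
      exact ⟨this.1, this.2.1⟩
  -- distance estimates
  have hd : ∀ i, ‖seq i - seq (i+1)‖ ^ K₁ ≤ ρ ^ K₁ * ((B * q ^ (K₁+i+1)) / M₀) := by
    intro i
    have h3 := (hF (i+1) (seq i) (hseq i).1).2.2
    rw [← hseqS i] at h3
    have hevalP : (P (i+1)).eval (seq i) = c (K₁+i+1) * (seq i) ^ (K₁+i+1) := by
      have : P (i+1) = P i + Polynomial.monomial (K₁+i+1) (c (K₁+i+1)) := by
        rw [hPdef]
        exact trunc_succ c (K₁+i)
      rw [this, Polynomial.eval_add, (hseq i).2, Polynomial.eval_monomial, zero_add]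
    have hevnorm : ‖(P (i+1)).eval (seq i)‖ ≤ B * q ^ (K₁+i+1) := by
      rw [hevalP, norm_mul, norm_pow]
      calc ‖c (K₁+i+1)‖ * ‖seq i‖ ^ (K₁+i+1) ≤ ‖c (K₁+i+1)‖ * ρ ^ (K₁+i+1) :=
            mul_le_mul_of_nonneg_left (pow_le_pow_left₀ (norm_nonneg _) (hseq i).1 _)
              (norm_nonneg _)
      _ ≤ B * q ^ (K₁+i+1) := hgeo _
    refine h3.trans (mul_le_mul_of_nonneg_left ?_ (by positivity))
    exact div_le_div₀ (by positivity) hevnorm hM₀ (hPG (i+1))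
  -- geometric bound
  set τ : ℝ := q ^ ((K₁ : ℝ)⁻¹) with hτdef
  have hK₁ne : (K₁ : ℝ) ≠ 0 := Nat.cast_ne_zero.mpr (by omega)
  have hτ0 : 0 ≤ τ := Real.rpow_nonneg hq0.le _
  have hτ1 : τ < 1 := Real.rpow_lt_one hq0.le hq1 (by positivity)
  set A : ℝ := ρ * (B * q ^ (K₁+1) / M₀) ^ ((K₁ : ℝ)⁻¹) with hAdef
  have hgeo2 : ∀ i, ‖seq i - seq (i+1)‖ ≤ A * τ ^ i := by
    intro i
    set δ := ‖seq i - seq (i+1)‖ with hδdef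
    have hδ0 : 0 ≤ δ := norm_nonneg _
    have hR : δ ^ K₁ ≤ (ρ ^ K₁ * (B * q ^ (K₁+1) / M₀)) * q ^ i := by
      calc δ ^ K₁ ≤ ρ ^ K₁ * ((B * q ^ (K₁+i+1)) / M₀) := hd i
      _ = (ρ ^ K₁ * (B * q ^ (K₁+1) / M₀)) * q ^ i := by
          rw [show K₁+i+1 = (K₁+1)+i by omega, pow_add]
          field_simp
    have hδle : δ ≤ ((ρ ^ K₁ * (B * q ^ (K₁+1) / M₀)) * q ^ i) ^ ((K₁ : ℝ)⁻¹) := by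
      have h1 : δ = (δ ^ K₁) ^ ((K₁ : ℝ)⁻¹) := by
        rw [← Real.rpow_natCast δ K₁, ← Real.rpow_mul hδ0, mul_inv_cancel₀ hK₁ne,
          Real.rpow_one]
      rw [h1]
      exact Real.rpow_le_rpow (by positivity) hR (by positivity)
    refine hδle.trans_eq ?_
    rw [Real.mul_rpow (by positivity) (by positivity),
      Real.mul_rpow (by positivity) (by positivity)]
    have e1 : ((ρ : ℝ) ^ K₁) ^ ((K₁ : ℝ)⁻¹) = ρ := by
      rw [← Real.rpow_natCast ρ K₁, ← Real.rpow_mul hρ.le, mul_inv_cancel₀ hK₁ne,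
        Real.rpow_one]
    have e2 : ((q : ℝ) ^ i) ^ ((K₁ : ℝ)⁻¹) = τ ^ i := by
      rw [← Real.rpow_natCast q i, ← Real.rpow_mul hq0.le, hτdef,
        ← Real.rpow_natCast (q ^ ((K₁:ℝ)⁻¹)) i, ← Real.rpow_mul hq0.le]
      ring_nf
    rw [e1, e2, hAdef]
  have hcauchy : CauchySeq seq :=
    cauchySeq_of_le_geometric τ A hτ1 (fun i => by
      rw [dist_eq_norm]; exact hgeo2 i)
  obtain ⟨z, hz⟩ := cauchySeq_tendsto_of_complete hcauchy
  have hzρ : ‖z‖ ≤ ρ := le_of_tendsto' hz.norm (fun i => (hseq i).1)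
  -- summability
  have hsum : ∀ w : Cp, ‖w‖ ≤ ρ → Summable (fun n => c n * w ^ n) := by
    intro w hw
    refine Summable.of_norm_bounded (g := fun n => B * q ^ n)
      ((summable_geometric_of_lt_one hq0.le hq1).mul_left B) (fun n => ?_)
    rw [norm_mul, norm_pow]
    calc ‖c n‖ * ‖w‖ ^ n ≤ ‖c n‖ * ρ ^ n :=
          mul_le_mul_of_nonneg_left (pow_le_pow_left₀ (norm_nonneg _) hw n) (norm_nonneg _)
    _ ≤ B * q ^ n := hgeo n
  -- tail bound at the approximating roots
  have htailsum : ∀ i, ‖∑' n, c n * (seq i) ^ n‖ ≤ (B * q ^ (K₁+i+1)) * (1 - q)⁻¹ := by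
    intro i
    have hx := (hseq i).1
    have hsplit := Summable.sum_add_tsum_nat_add (f := fun n => c n * (seq i) ^ n) (K₁ + i + 1)
      (hsum (seq i) hx)
    have hzero : ∑ n ∈ Finset.range (K₁+i+1), c n * (seq i) ^ n = 0 := by
      have := (hseq i).2
      rw [hPdef, Polynomial.IsRoot, trunc_eval] at this
      simpa using this
    have heq : ∑' n, c n * (seq i) ^ n = ∑' n, c (n + (K₁+i+1)) * (seq i) ^ (n + (K₁+i+1)) := by
      rw [← hsplit, hzero, zero_add]
    rw [heq]
    have hmaj : ∀ n : ℕ, ‖c (n + (K₁+i+1)) * (seq i) ^ (n + (K₁+i+1))‖ ≤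
        (B * q ^ (K₁+i+1)) * q ^ n := by
      intro n
      rw [norm_mul, norm_pow]
      calc ‖c (n + (K₁+i+1))‖ * ‖seq i‖ ^ (n + (K₁+i+1))
          ≤ ‖c (n + (K₁+i+1))‖ * ρ ^ (n + (K₁+i+1)) :=
            mul_le_mul_of_nonneg_left (pow_le_pow_left₀ (norm_nonneg _) hx _) (norm_nonneg _)
      _ ≤ B * q ^ (n + (K₁+i+1)) := hgeo _
      _ = (B * q ^ (K₁+i+1)) * q ^ n := by rw [pow_add]; ring
    calc ‖∑' n, c (n + (K₁+i+1)) * (seq i) ^ (n + (K₁+i+1))‖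
        ≤ ∑' n, ((B * q ^ (K₁+i+1)) * q ^ n) := by
          refine norm_tsum_le_tsum_norm ?_ |>.trans (Summable.tsum_le_tsum hmaj ?_ ?_)
          · exact Summable.of_norm_bounded (((summable_geometric_of_lt_one hq0.le
              hq1).mul_left (B * q ^ (K₁+i+1)))) (fun n => by
                simpa using hmaj n)
          · exact Summable.of_norm_bounded (((summable_geometric_of_lt_one hq0.le
              hq1).mul_left (B * q ^ (K₁+i+1)))) (fun n => by
                simpa [abs_of_nonneg (norm_nonneg _)] using hmaj n)
          · exact (summable_geometric_of_lt_one hq0.le hq1).mul_left _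
    _ = (B * q ^ (K₁+i+1)) * (1 - q)⁻¹ := by
          rw [tsum_mul_left, tsum_geometric_of_lt_one hq0.le hq1]
  -- modulus-of-continuity bound
  set Sg : ℝ := ∑' (n : ℕ), (n : ℝ) * q ^ n * (B / ρ) with hSgdef
  have hsummaj : Summable (fun n : ℕ => (n : ℝ) * q ^ n * (B / ρ)) := by
    refine Summable.mul_right _ ?_
    simpa using summable_pow_mul_geometric_of_norm_lt_one 1
      (by rw [Real.norm_eq_abs, abs_of_nonneg hq0.le]; exact hq1)
  have hdiff : ∀ w x : Cp, ‖w‖ ≤ ρ → ‖x‖ ≤ ρ →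
      ‖(∑' n, c n * w ^ n) - (∑' n, c n * x ^ n)‖ ≤ ‖w - x‖ * Sg := by
    intro w x hw hx
    rw [← Summable.tsum_sub (hsum w hw) (hsum x hx)]
    have hterm : ∀ n : ℕ, ‖c n * w ^ n - c n * x ^ n‖ ≤ ‖w - x‖ * ((n:ℝ) * q ^ n * (B / ρ)) := by
      intro n
      rw [← mul_sub, norm_mul]
      calc ‖c n‖ * ‖w ^ n - x ^ n‖ ≤ ‖c n‖ * ((n : ℝ) * ρ ^ (n-1) * ‖w - x‖) :=
            mul_le_mul_of_nonneg_left (pow_sub_pow_norm_le hw hx hρ n) (norm_nonneg _)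
      _ ≤ ‖w - x‖ * ((n:ℝ) * q ^ n * (B / ρ)) := by
          rcases Nat.eq_zero_or_pos n with rfl | hn
          · simp
          have h1 : ‖c n‖ * ρ ^ (n-1) ≤ B * q ^ n / ρ := by
            rw [le_div_iff₀ hρ]
            calc ‖c n‖ * ρ ^ (n-1) * ρ = ‖c n‖ * ρ ^ n := by
                  rw [mul_assoc, ← pow_succ]; congr 2; omega
            _ ≤ B * q ^ n := hgeo n
            
          calc ‖c n‖ * ((n : ℝ) * ρ ^ (n-1) * ‖w - x‖)
              = (‖c n‖ * ρ ^ (n-1)) * (n : ℝ) * ‖w - x‖ := by ring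
          _ ≤ (B * q ^ n / ρ) * (n : ℝ) * ‖w - x‖ := by
              refine mul_le_mul_of_nonneg_right (mul_le_mul_of_nonneg_right h1 (by positivity)) (norm_nonneg _)
          _ = ‖w - x‖ * ((n:ℝ) * q ^ n * (B / ρ)) := by ring
    calc ‖∑' n, (c n * w ^ n - c n * x ^ n)‖
        ≤ ∑' n, ‖c n * w ^ n - c n * x ^ n‖ := by
          refine norm_tsum_le_tsum_norm ?_
          exact Summable.of_norm_bounded (hsummaj.mul_left ‖w - x‖) (fun n => by
            simpa [abs_of_nonneg (norm_nonneg _)] using hterm n)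
    _ ≤ ∑' (n : ℕ), ‖w - x‖ * ((n:ℝ) * q ^ n * (B / ρ)) := by
          refine Summable.tsum_le_tsum hterm ?_ (hsummaj.mul_left _)
          exact Summable.of_norm_bounded (hsummaj.mul_left ‖w - x‖) (fun n => by
            simpa [abs_of_nonneg (norm_nonneg _)] using hterm n)
    _ = ‖w - x‖ * Sg := by rw [hSgdef, tsum_mul_left]
  -- conclude
  refine ⟨z, hzρ, ?_⟩
  have hbound : ∀ i, ‖∑' n, c n * z ^ n‖ ≤
      ‖z - seq i‖ * Sg + (B * q ^ (K₁+i+1)) * (1 - q)⁻¹ := by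
    intro i
    calc ‖∑' n, c n * z ^ n‖
        ≤ ‖(∑' n, c n * z ^ n) - (∑' n, c n * (seq i) ^ n)‖ + ‖∑' n, c n * (seq i) ^ n‖ :=
          by
            have h := norm_add_le ((∑' n, c n * z ^ n) - (∑' n, c n * (seq i) ^ n))
              (∑' n, c n * (seq i) ^ n)
            simpa using h
    _ ≤ ‖z - seq i‖ * Sg + (B * q ^ (K₁+i+1)) * (1 - q)⁻¹ :=
          add_le_add (hdiff z (seq i) hzρ (hseq i).1) (htailsum i)
  have hlim : Tendsto (fun i => ‖z - seq i‖ * Sg + (B * q ^ (K₁+i+1)) * (1 - q)⁻¹)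
      atTop (nhds 0) := by
    have h1 : Tendsto (fun i => ‖z - seq i‖) atTop (nhds 0) := by
      have := (tendsto_const_nhds (x := z) (f := atTop)).sub hz
      simpa using this.norm
    have h2 : Tendsto (fun i : ℕ => (B * q ^ (K₁+i+1)) * (1 - q)⁻¹) atTop (nhds 0) := by
      have : Tendsto (fun i : ℕ => q ^ i) atTop (nhds 0) :=
        tendsto_pow_atTop_nhds_zero_of_lt_one hq0.le hq1
      have h3 := ((this.const_mul (B * q ^ (K₁+1))).mul_const ((1 - q)⁻¹))
      simp only [mul_zero, zero_mul] at h3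
      refine h3.congr fun i => ?_
      rw [show K₁+i+1 = (K₁+1)+i by omega, pow_add]
      ring
    have := (h1.mul_const Sg).add h2
    simpa using this
  exact norm_le_zero_iff.mp (ge_of_tendsto' hlim hbound)
end E
section F
open Polynomial
variable {Cp : Type*} [NontriviallyNormedField Cp] [IsUltrametricDist Cp]
  [CompleteSpace Cp]

/-- identity theorem: if the sum of a bounded-coefficient series vanishes on a ball,
all coefficients vanish. -/
lemma coeffs_eq_zero {r : ℝ} (hr : 0 < r) (u : ℕ → Cp) {B : ℝ}
    (hB : ∀ n, ‖u n‖ * r ^ n ≤ B)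
    (hvan : ∀ z : Cp, ‖z‖ ≤ r → ∑' n, u n * z ^ n = 0) : ∀ n, u n = 0 := by
  have hB0 : 0 ≤ B := le_trans (by positivity) (hB 0)
  have hBn : ∀ n, ‖u n‖ ≤ B / r ^ n := fun n =>
    (le_div_iff₀ (by positivity)).mpr (hB n)
  intro n
  induction n using Nat.strong_induction_on with
  | _ n ih =>
    have key : ∀ z : Cp, z ≠ 0 → ‖z‖ ≤ r / 2 → ‖u n‖ ≤ ‖z‖ * (2 * B / r ^ (n+1)) := by
      intro z hz0 hz
      have hzr : ‖z‖ ≤ r := hz.trans (by linarith)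
      have hhalf : ∀ k : ℕ, ‖z‖ ^ k ≤ (r/2) ^ k :=
        fun k => pow_le_pow_left₀ (norm_nonneg _) hz k
      have hbound : ∀ (j k : ℕ), ‖u (k + j) * z ^ k‖ ≤ (B / r ^ j) * (1/2) ^ k := by
        intro j k
        rw [norm_mul, norm_pow]
        calc ‖u (k+j)‖ * ‖z‖ ^ k ≤ (B / r ^ (k+j)) * (r/2) ^ k :=
              mul_le_mul (hBn (k+j)) (hhalf k) (by positivity) (by positivity)
        _ = (B / r ^ j) * (1/2) ^ k := by
            rw [pow_add, div_pow]
            field_simp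
            rw [mul_assoc, ← mul_pow]; norm_num
      have hsummable : ∀ j : ℕ, Summable (fun k => u (k + j) * z ^ k) := by
        intro j
        refine Summable.of_norm_bounded (g := fun k => (B / r ^ j) * (1/2 : ℝ) ^ k)
          ((summable_geometric_of_lt_one (by norm_num) (by norm_num)).mul_left _)
          (hbound j)
      have hsum0 : Summable (fun k => u k * z ^ k) := by
        have := hsummable 0
        simpa using this
      have hvz := hvan z hzr
      have hsplit := Summable.sum_add_tsum_nat_add (f := fun k => u k * z ^ k) n hsum0
      have hfirst : ∑ k ∈ Finset.range n, u k * z ^ k = 0 := by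
        refine Finset.sum_eq_zero fun k hk => ?_
        rw [ih k (Finset.mem_range.mp hk), zero_mul]
      have htails : ∑' k, u (k + n) * z ^ (k + n) = 0 := by
        rw [← hsplit, hfirst, zero_add] at hvz
        exact hvz
      have hfac : ∑' k, u (k + n) * z ^ (k + n) = z ^ n * ∑' k, u (k + n) * z ^ k := by
        rw [← tsum_mul_left]
        exact tsum_congr fun k => by rw [pow_add]; ring
      have hS : ∑' k, u (k + n) * z ^ k = 0 := by
        rw [hfac] at htails
        rcases mul_eq_zero.mp htails with h | h
        · exact absurd h (pow_ne_zero n hz0)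
        · exact h
      have hsplit1 := Summable.sum_add_tsum_nat_add (f := fun k => u (k + n) * z ^ k) 1 (hsummable n)
      have hfirst1 : ∑ k ∈ Finset.range 1, u (k + n) * z ^ k = u n := by simp
      have hTfac : ∑' k, u (k + 1 + n) * z ^ (k + 1) = z * ∑' k, u (k + (n+1)) * z ^ k := by
        rw [← tsum_mul_left]
        refine tsum_congr fun k => ?_
        rw [show k + 1 + n = k + (n+1) by omega, pow_succ]
        ring
      have hun : u n = - (z * ∑' k, u (k + (n+1)) * z ^ k) := by
        have h := hsplit1
        rw [hS, hfirst1, hTfac] at h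
        exact eq_neg_of_add_eq_zero_left h
      have hT : ‖∑' k, u (k + (n+1)) * z ^ k‖ ≤ 2 * B / r ^ (n+1) := by
        have hgsum : Summable (fun k : ℕ => (B / r ^ (n+1)) * (1/2 : ℝ) ^ k) :=
          (summable_geometric_of_lt_one (by norm_num) (by norm_num)).mul_left _
        have habs : Summable (fun k => ‖u (k + (n+1)) * z ^ k‖) :=
          Summable.of_norm_bounded hgsum (fun k => by
            rw [Real.norm_eq_abs, abs_of_nonneg (norm_nonneg _)]
            exact hbound (n+1) k)
        calc ‖∑' k, u (k + (n+1)) * z ^ k‖ ≤ ∑' k, ((B / r ^ (n+1)) * (1/2 : ℝ) ^ k) :=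
              (norm_tsum_le_tsum_norm habs).trans (Summable.tsum_le_tsum (hbound (n+1)) habs hgsum)
        _ = 2 * B / r ^ (n+1) := by
              rw [tsum_mul_left, tsum_geometric_of_lt_one (by norm_num) (by norm_num)]
              norm_num
              ring
      calc ‖u n‖ = ‖z‖ * ‖∑' k, u (k + (n+1)) * z ^ k‖ := by
            rw [hun, norm_neg, norm_mul]
      _ ≤ ‖z‖ * (2 * B / r ^ (n+1)) :=
            mul_le_mul_of_nonneg_left hT (norm_nonneg _)
    -- conclude u n = 0
    by_contra hne
    have hpos : 0 < ‖u n‖ := norm_pos_iff.mpr hne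
    set Cst := 2 * B / r ^ (n+1) with hCst
    have hCst0 : 0 ≤ Cst := by positivity
    set ε := min (‖u n‖ / (2 * (Cst + 1))) (r / 2) with hε
    have hε0 : 0 < ε := lt_min (by positivity) (by positivity)
    obtain ⟨z, hz0, hzε⟩ := NormedField.exists_norm_lt Cp hε0
    have hz0' : z ≠ 0 := norm_pos_iff.mp hz0
    have hzr2 : ‖z‖ ≤ r / 2 := le_of_lt (lt_of_lt_of_le hzε (min_le_right _ _))
    have h1 := key z hz0' hzr2
    have h2 : ‖z‖ * Cst ≤ ‖z‖ * (Cst + 1) := by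
      refine mul_le_mul_of_nonneg_left (by linarith) (norm_nonneg _)
    have h3 : ‖z‖ * (Cst + 1) < ε * (Cst + 1) :=
      mul_lt_mul_of_pos_right hzε (by linarith)
    have h4 : ε * (Cst + 1) ≤ ‖u n‖ / 2 := by
      have : ε ≤ ‖u n‖ / (2 * (Cst + 1)) := min_le_left _ _
      calc ε * (Cst + 1) ≤ (‖u n‖ / (2 * (Cst + 1))) * (Cst + 1) :=
            mul_le_mul_of_nonneg_right this (by linarith)
      _ = ‖u n‖ / 2 := by field_simp
    linarith [h1]
end F
section G
open Polynomial
variable {Cp : Type*} [NontriviallyNormedField Cp] [IsUltrametricDist Cp]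
  [CompleteSpace Cp]

lemma gauss_conv_poly (Q : Polynomial Cp) (hQ : Q ≠ 0) (c : ℕ → Cp) {ρ : ℝ} (hρ : 0 < ρ)
    (hcρ : Tendsto (fun n => ‖c n‖ * ρ ^ n) atTop (nhds 0)) {n₁ : ℕ} (hc1 : c n₁ ≠ 0) :
    gaussNorm (convS Q.coeff c) ρ = pGauss Q ρ * gaussNorm c ρ := by
  obtain ⟨i₀, hi₀, hi₀'⟩ := poly_attain hρ hQ
  obtain ⟨j₀, hj₀, hj₀'⟩ := exists_greatest_attain hρ hcρ hc1
  have hbu := poly_bdd Q ρ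
  have hbv := bdd_of_tendsto hcρ
  have hcpos : 0 < gaussNorm c ρ :=
    lt_of_lt_of_le (mul_pos (norm_pos_iff.mpr hc1) (pow_pos hρ n₁)) (le_gauss _ hbv n₁)
  have hbconv : BddAbove (Set.range fun n => ‖convS Q.coeff c n‖ * ρ ^ n) := by
    refine ⟨pGauss Q ρ * gaussNorm c ρ, ?_⟩
    rintro x ⟨n, rfl⟩
    exact convS_term_le hρ hbu hbv n
  refine le_antisymm (gauss_le _ (mul_nonneg (pGauss_nonneg Q hρ.le) (gauss_nonneg c hρ.le))
    fun n => convS_term_le hρ hbu hbv n) ?_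
  calc pGauss Q ρ * gaussNorm c ρ = ‖convS Q.coeff c (i₀ + j₀)‖ * ρ ^ (i₀ + j₀) :=
        (convS_attain hρ hbu hbv hi₀ hi₀' hj₀ hj₀' (pGauss_pos hρ hQ) hcpos).symm
  _ ≤ gaussNorm (convS Q.coeff c) ρ := le_gauss _ hbconv _

theorem statement1'
    (Cp : Type*) [NontriviallyNormedField Cp]
    [IsUltrametricDist Cp] [CompleteSpace Cp] [IsAlgClosed Cp]
    (r s t : ℝ) (hr : 0 < r) (hs : 0 < s) (hst : s ≤ t) (htr : t ≤ r)
    (a : ℕ → Cp) (ha : Tendsto (fun n => ‖a n‖ * r ^ n) atTop (nhds 0))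
    (c : ℕ → Cp) (hc : Tendsto (fun n => ‖c n‖ * r ^ n) atTop (nhds 0))
    (m : ℕ) (α : Cp) (b : Fin m → Cp) (hb : ∀ i, ‖b i‖ < t)
    (hg : ∀ z : Cp, ‖z‖ < t → (∑' n, c n * z ^ n) ≠ 0)
    (hfactor : ∀ z : Cp, ‖z‖ ≤ r →
      ∑' n, a n * z ^ n = α * (∏ i, (z - b i)) * ∑' n, c n * z ^ n) :
    gaussNorm a t ≤ (t / s) ^ m * gaussNorm a s := by
  classical
  have ht0 : 0 < t := hs.trans_le hst
  set Q : Polynomial Cp := Polynomial.C α * ∏ i, (Polynomial.X - Polynomial.C (b i)) with hQdef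
  set e : ℕ → Cp := Q.coeff with hedef
  -- c 0 ≠ 0
  have hc0 : c 0 ≠ 0 := by
    intro h
    refine hg 0 (by simpa using ht0) ?_
    rw [tsum_eq_single 0 (fun n hn => by rw [zero_pow hn, mul_zero])]
    simpa using h
  -- bounds for a and c at radius r
  obtain ⟨Ba, hBa'⟩ := bdd_of_tendsto ha
  have hBa : ∀ n, ‖a n‖ * r ^ n ≤ Ba := fun n => hBa' (Set.mem_range_self n)
  obtain ⟨Bc, hBc'⟩ := bdd_of_tendsto hc
  have hBc : ∀ n, ‖c n‖ * r ^ n ≤ Bc := fun n => hBc' (Set.mem_range_self n)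
  have hBc0 : 0 ≤ Bc := le_trans (by positivity) (hBc 0)
  have hBa0 : 0 ≤ Ba := le_trans (by positivity) (hBa 0)
  -- summability facts for |z| ≤ r/2
  have hcsum : ∀ z : Cp, ‖z‖ ≤ r/2 → Summable (fun n => ‖c n * z ^ n‖) := by
    intro z hz
    refine Summable.of_norm_bounded (g := fun n => Bc * (1/2 : ℝ) ^ n)
      ((summable_geometric_of_lt_one (by norm_num) (by norm_num)).mul_left _) (fun n => ?_)
    rw [Real.norm_eq_abs, abs_of_nonneg (norm_nonneg _), norm_mul, norm_pow]
    calc ‖c n‖ * ‖z‖ ^ n ≤ ‖c n‖ * (r/2) ^ n :=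
          mul_le_mul_of_nonneg_left (pow_le_pow_left₀ (norm_nonneg _) hz n) (norm_nonneg _)
    _ = (‖c n‖ * r ^ n) * (1/2) ^ n := by rw [div_pow, one_div, inv_pow]; ring
    _ ≤ Bc * (1/2) ^ n := mul_le_mul_of_nonneg_right (hBc n) (by positivity)
  have hasum : ∀ z : Cp, ‖z‖ ≤ r/2 → Summable (fun n => a n * z ^ n) := by
    intro z hz
    refine Summable.of_norm_bounded (g := fun n => Ba * (1/2 : ℝ) ^ n)
      ((summable_geometric_of_lt_one (by norm_num) (by norm_num)).mul_left _) (fun n => ?_)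
    rw [norm_mul, norm_pow]
    calc ‖a n‖ * ‖z‖ ^ n ≤ ‖a n‖ * (r/2) ^ n :=
          mul_le_mul_of_nonneg_left (pow_le_pow_left₀ (norm_nonneg _) hz n) (norm_nonneg _)
    _ = (‖a n‖ * r ^ n) * (1/2) ^ n := by rw [div_pow, one_div, inv_pow]; ring
    _ ≤ Ba * (1/2) ^ n := mul_le_mul_of_nonneg_right (hBa n) (by positivity)
  have hesum : ∀ z : Cp, Summable (fun n => ‖e n * z ^ n‖) := by
    intro z
    refine summable_of_ne_finset_zero (s := Finset.range (Q.natDegree + 1)) (fun n hn => ?_)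
    rw [hedef, Polynomial.coeff_eq_zero_of_natDegree_lt
      (by simpa [Nat.lt_succ_iff] using hn), zero_mul, norm_zero]
  -- value of the polynomial as a series
  have hQts : ∀ z : Cp, ∑' n, e n * z ^ n = Q.eval z := by
    intro z
    rw [Polynomial.eval_eq_sum_range]
    refine tsum_eq_sum (fun n hn => ?_)
    rw [hedef, Polynomial.coeff_eq_zero_of_natDegree_lt
      (by simpa [Nat.lt_succ_iff] using hn), zero_mul]
  -- Cauchy product
  have hcauchy : ∀ z : Cp, ‖z‖ ≤ r/2 →
      ∑' n, convS e c n * z ^ n = Q.eval z * ∑' n, c n * z ^ n := by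
    intro z hz
    have h := tsum_mul_tsum_eq_tsum_sum_antidiagonal_of_summable_norm
      (f := fun n => e n * z ^ n) (g := fun n => c n * z ^ n) (hesum z) (hcsum z hz)
    rw [← hQts z, h]
    refine tsum_congr fun n => ?_
    simp only [convS, Finset.sum_mul]
    refine Finset.sum_congr rfl fun kl hkl => ?_
    have hkl' : kl.1 + kl.2 = n := Finset.HasAntidiagonal.mem_antidiagonal.mp hkl
    rw [← hkl', pow_add]
    ring
  have hevalQ : ∀ z : Cp, Q.eval z = α * ∏ i, (z - b i) := by
    intro z
    rw [hQdef]
    simp [Polynomial.eval_prod]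
  have hGec : ∀ n, ‖convS e c n‖ * r ^ n ≤ pGauss Q r * gaussNorm c r := by
    intro n
    rw [hedef]
    exact convS_term_le hr (poly_bdd Q r) (bdd_of_tendsto hc) n
  have hae : ∀ n, a n = convS e c n := by
    have hub : ∀ n, ‖a n - convS e c n‖ * (r/2) ^ n ≤ Ba + pGauss Q r * gaussNorm c r := by
      intro n
      calc ‖a n - convS e c n‖ * (r/2) ^ n ≤ (‖a n‖ + ‖convS e c n‖) * r ^ n := by
            refine mul_le_mul (norm_sub_le _ _)
              (pow_le_pow_left₀ (by positivity) (by linarith) n) (by positivity) (by positivity)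
      _ = ‖a n‖ * r ^ n + ‖convS e c n‖ * r ^ n := by ring
      _ ≤ Ba + pGauss Q r * gaussNorm c r := add_le_add (hBa n) (hGec n)
    have hvan : ∀ z : Cp, ‖z‖ ≤ r/2 → ∑' n, (a n - convS e c n) * z ^ n = 0 := by
      intro z hz
      have hzr : ‖z‖ ≤ r := hz.trans (by linarith)
      have hconvsum : Summable (fun n => convS e c n * z ^ n) := by
        refine Summable.of_norm_bounded (g := fun n => (pGauss Q r * gaussNorm c r) * (1/2 : ℝ)^n)
          ((summable_geometric_of_lt_one (by norm_num) (by norm_num)).mul_left _) fun n => ?_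
        rw [norm_mul, norm_pow]
        calc ‖convS e c n‖ * ‖z‖ ^ n ≤ ‖convS e c n‖ * (r/2) ^ n :=
              mul_le_mul_of_nonneg_left (pow_le_pow_left₀ (norm_nonneg _) hz n) (norm_nonneg _)
        _ = (‖convS e c n‖ * r ^ n) * (1/2 : ℝ) ^ n := by rw [div_pow, one_div, inv_pow]; ring
        _ ≤ (pGauss Q r * gaussNorm c r) * (1/2 : ℝ)^n :=
              mul_le_mul_of_nonneg_right (hGec n) (by positivity)
      have hsub : ∑' n, (a n - convS e c n) * z ^ n
          = (∑' n, a n * z ^ n) - ∑' n, convS e c n * z ^ n := by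
        rw [← Summable.tsum_sub (hasum z hz) hconvsum]
        exact tsum_congr fun n => by ring
      rw [hsub, hfactor z hzr, hcauchy z hz, hevalQ z]
      ring
    intro n
    have := coeffs_eq_zero (r := r/2) (by positivity) (fun n => a n - convS e c n) hub hvan n
    exact sub_eq_zero.mp this
  -- trivial case α = 0
  rcases eq_or_ne α 0 with rfl | hα
  · have hQ0 : Q = 0 := by rw [hQdef]; simp
    have ha0 : ∀ n, a n = 0 := by
      intro n
      rw [hae n, hedef, hQ0]
      simp [convS]
    have hgt0 : gaussNorm a t = 0 := by
      simp [_root_.gaussNorm, ha0]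
    have hgs0 : gaussNorm a s = 0 := by
      simp [_root_.gaussNorm, ha0]
    rw [hgt0, hgs0, mul_zero]
  -- main case
  have hQne : Q ≠ 0 := by
    rw [hQdef]
    refine mul_ne_zero (by simpa using hα) ?_
    exact (Polynomial.monic_prod_of_monic _ _ fun i _ => Polynomial.monic_X_sub_C (b i)).ne_zero
  have hcrad : ∀ ρ : ℝ, 0 < ρ → ρ ≤ r → Tendsto (fun n => ‖c n‖ * ρ ^ n) atTop (nhds 0) := by
    intro ρ h0 hρr
    refine squeeze_zero (fun n => by positivity) (fun n => ?_) hc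
    exact mul_le_mul_of_nonneg_left (pow_le_pow_left₀ h0.le hρr n) (norm_nonneg _)
  have hkey : ∀ n, ‖c n‖ * t ^ n ≤ ‖c 0‖ := by
    intro n
    rcases Nat.eq_zero_or_pos n with rfl | hn
    · simp
    by_contra hcon
    push_neg at hcon
    have hcont : Tendsto (fun ρ : ℝ => ‖c n‖ * ρ ^ n) (nhdsWithin t (Set.Iio t))
        (nhds (‖c n‖ * t ^ n)) :=
      Tendsto.mono_left ((continuous_const.mul (continuous_pow n)).tendsto t) nhdsWithin_le_nhds
    have hev1 := hcont.eventually (eventually_gt_nhds hcon)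
    have hev2 : ∀ᶠ ρ in nhdsWithin t (Set.Iio t), 0 < ρ :=
      Filter.Eventually.filter_mono nhdsWithin_le_nhds (eventually_gt_nhds ht0)
    have hev3 : ∀ᶠ ρ in nhdsWithin t (Set.Iio t), ρ < t :=
      eventually_mem_nhdsWithin.mono fun x hx => hx
    obtain ⟨ρ, h1, h2, h3⟩ := (hev1.and (hev2.and hev3)).exists
    obtain ⟨z, hzρ, hz0⟩ := exists_zero h2 (lt_of_lt_of_le h3 htr) c hc n hn h1
    exact hg z (lt_of_le_of_lt hzρ h3) hz0
  have hgct : gaussNorm c t = ‖c 0‖ := by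
    refine le_antisymm (gauss_le _ (norm_nonneg _) hkey) ?_
    have := le_gauss c (bdd_of_tendsto (hcrad t ht0 htr)) 0
    simpa using this
  have hgcs : gaussNorm c s = ‖c 0‖ := by
    refine le_antisymm (gauss_le _ (norm_nonneg _) fun n => le_trans ?_ (hkey n)) ?_
    · exact mul_le_mul_of_nonneg_left (pow_le_pow_left₀ hs.le hst n) (norm_nonneg _)
    · have := le_gauss c (bdd_of_tendsto (hcrad s hs (hst.trans htr))) 0
      simpa using this
  have hQprod : ∀ ρ : ℝ, 0 < ρ → pGauss Q ρ = ‖α‖ * ∏ i, max ρ ‖b i‖ := by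
    intro ρ hρ
    rw [hQdef, pGauss_mul _ _ hρ, pGauss_C _ hρ]
    congr 1
    have h1 : (∏ i, (Polynomial.X - Polynomial.C (b i))) =
        ((Finset.univ.val.map b).map (fun β => Polynomial.X - Polynomial.C β)).prod := by
      rw [Multiset.map_map, Finset.prod_eq_multiset_prod]
      rfl
    rw [h1, pGauss_multiset _ hρ, Multiset.map_map, Finset.prod_eq_multiset_prod]
    rfl
  have ha' : a = convS e c := funext hae
  have hconvt : gaussNorm a t = pGauss Q t * gaussNorm c t := by
    rw [ha', hedef]
    exact gauss_conv_poly Q hQne c ht0 (hcrad t ht0 htr) hc0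
  have hconvs : gaussNorm a s = pGauss Q s * gaussNorm c s := by
    rw [ha', hedef]
    exact gauss_conv_poly Q hQne c hs (hcrad s hs (hst.trans htr)) hc0
  have hprodt : ∏ i, max t ‖b i‖ = t ^ m := by
    rw [Finset.prod_congr rfl fun i _ => max_eq_left (hb i).le]
    simp
  have hprods : s ^ m ≤ ∏ i, max s ‖b i‖ := by
    calc s ^ m = ∏ _i : Fin m, s := by simp
    _ ≤ ∏ i, max s ‖b i‖ :=
        Finset.prod_le_prod (fun _ _ => hs.le) (fun i _ => le_max_left _ _)
  rw [hconvt, hconvs, hgct, hgcs, hQprod t ht0, hQprod s hs, hprodt]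
  calc ‖α‖ * t ^ m * ‖c 0‖ = (t/s)^m * (‖α‖ * s ^ m * ‖c 0‖) := by
        rw [div_pow]
        field_simp
  _ ≤ (t/s)^m * (‖α‖ * (∏ i, max s ‖b i‖) * ‖c 0‖) := by
        refine mul_le_mul_of_nonneg_left ?_ (by positivity)
        exact mul_le_mul_of_nonneg_right
          (mul_le_mul_of_nonneg_left hprods (norm_nonneg _)) (norm_nonneg _)
end G

theorem statement1
    -- `Cp` is a model of `ℂ_p`:
    (p : ℕ) [Fact p.Prime] (Cp : Type*) [NontriviallyNormedField Cp]
    [IsUltrametricDist Cp] [CompleteSpace Cp] [IsAlgClosed Cp]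
    (hpCp : ‖(p : Cp)‖ = (p : ℝ)⁻¹)
    -- the radii:
    (r s t : ℝ) (hr : 0 < r) (hs : 0 < s) (hst : s ≤ t) (htr : t ≤ r)
    -- `f` is analytic on the closed ball of radius `r`, with coefficient
    -- sequence `a`:
    (a : ℕ → Cp) (ha : Tendsto (fun n => ‖a n‖ * r ^ n) atTop (nhds 0))
    -- `g` is analytic on the closed ball of radius `r`, with coefficient
    -- sequence `c`:
    (c : ℕ → Cp) (hc : Tendsto (fun n => ‖c n‖ * r ^ n) atTop (nhds 0))
    -- `f` has exactly `m` zeros `b 0, …, b (m-1)` (with multiplicity) in the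
    -- open ball `B(t)`, in the sense that
    -- `f(z) = α * (z - b 1)⋯(z - b m) * g(z)` with all `b i ∈ B(t)` and `g`
    -- having no zero in `B(t)`:
    (m : ℕ) (α : Cp) (b : Fin m → Cp) (hb : ∀ i, ‖b i‖ < t)
    (hg : ∀ z : Cp, ‖z‖ < t → (∑' n, c n * z ^ n) ≠ 0)
    (hfactor : ∀ z : Cp, ‖z‖ ≤ r →
      ∑' n, a n * z ^ n = α * (∏ i, (z - b i)) * ∑' n, c n * z ^ n) :
    -- conclusion: `|f|_t ≤ (t/s)^m * |f|_s`
    gaussNorm a t ≤ (t / s) ^ m * gaussNorm a s :=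
  statement1' Cp r s t hr hs hst htr a ha c hc m α b hb hg hfactor
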